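/- Let c ∈ ℂ with c ≠ 0 and f(x,y) = |∑_{i=1}^n x_i y_i − c|² on ℂⁿ × ℂⁿ regarded as a real inner product space. Then grad f(x,y) = 0 if and only if ∑_i x_i y_i = c or (x,y) = (0,0). In particular, the only critical point of f outside the zero set of μ_ℂ (the only non-minimal critical point) is the origin. -/

import Mathlib

set_option maxHeartbeats 1000000

noncomputable section

abbrev HypVS (n : ℕ) : Type :=
  WithLp 2 (EuclideanSpace ℂ (Fin n) × EuclideanSpace ℂ (Fin n))

def xPart {n : ℕ} (p : HypVS n) : EuclideanSpace ℂ (Fin n) :=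
  (WithLp.equiv 2 (EuclideanSpace ℂ (Fin n) × EuclideanSpace ℂ (Fin n)) p).1

def yPart {n : ℕ} (p : HypVS n) : EuclideanSpace ℂ (Fin n) :=
  (WithLp.equiv 2 (EuclideanSpace ℂ (Fin n) × EuclideanSpace ℂ (Fin n)) p).2

def muC {n : ℕ} (c : ℂ) (p : HypVS n) : ℂ :=
  (∑ i, xPart p i * yPart p i) - c

abbrev Ecn (n : ℕ) := EuclideanSpace ℂ (Fin n)

def cX (n : ℕ) (i : Fin n) : HypVS n →L[ℝ] ℂ :=
  (((EuclideanSpace.proj i : Ecn n →L[ℂ] ℂ).restrictScalars ℝ).comp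
    ((ContinuousLinearMap.fst ℝ (Ecn n) (Ecn n)).comp
      (WithLp.prodContinuousLinearEquiv 2 ℝ (Ecn n) (Ecn n)).toContinuousLinearMap))

def cY (n : ℕ) (i : Fin n) : HypVS n →L[ℝ] ℂ :=
  (((EuclideanSpace.proj i : Ecn n →L[ℂ] ℂ).restrictScalars ℝ).comp
    ((ContinuousLinearMap.snd ℝ (Ecn n) (Ecn n)).comp
      (WithLp.prodContinuousLinearEquiv 2 ℝ (Ecn n) (Ecn n)).toContinuousLinearMap))

lemma cX_apply {n : ℕ} (i : Fin n) (q : HypVS n) : cX n i q = xPart q i := rfl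
lemma cY_apply {n : ℕ} (i : Fin n) (q : HypVS n) : cY n i q = yPart q i := rfl

def Lder {n : ℕ} (p : HypVS n) : HypVS n →L[ℝ] ℂ :=
  ∑ i, ((xPart p i) • cY n i + (yPart p i) • cX n i)

lemma hasFDerivAt_muC {n : ℕ} (c : ℂ) (p : HypVS n) :
    HasFDerivAt (muC c) (Lder p) p := by
  have : HasFDerivAt (fun q : HypVS n => (∑ i, cX n i q * cY n i q) - c) (Lder p) p := by
    apply HasFDerivAt.sub_const
    exact HasFDerivAt.fun_sum (fun i _ => ((cX n i).hasFDerivAt.mul (cY n i).hasFDerivAt))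
  exact this

lemma Lder_apply {n : ℕ} (p v : HypVS n) :
    Lder p v = ∑ i, (xPart p i * yPart v i + yPart p i * xPart v i) := by
  simp [Lder, ContinuousLinearMap.sum_apply, cX_apply, cY_apply, smul_eq_mul]

/-- the vector with x-part `single i w`, y-part 0 -/
def vX {n : ℕ} (i : Fin n) (w : ℂ) : HypVS n :=
  (WithLp.equiv 2 (Ecn n × Ecn n)).symm (EuclideanSpace.single i w, 0)

def vY {n : ℕ} (i : Fin n) (w : ℂ) : HypVS n :=
  (WithLp.equiv 2 (Ecn n × Ecn n)).symm (0, EuclideanSpace.single i w)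

lemma Lder_vX {n : ℕ} (p : HypVS n) (i : Fin n) (w : ℂ) :
    Lder p (vX i w) = yPart p i * w := by
  simp [Lder_apply, vX, xPart, yPart, EuclideanSpace.single_apply, mul_ite,
    Finset.sum_ite_eq']

lemma Lder_vY {n : ℕ} (p : HypVS n) (i : Fin n) (w : ℂ) :
    Lder p (vY i w) = xPart p i * w := by
  simp [Lder_apply, vY, xPart, yPart, EuclideanSpace.single_apply, mul_ite,
    Finset.sum_ite_eq']

theorem stmt5 (n : ℕ) (c : ℂ) (hc : c ≠ 0) (f : HypVS n → ℝ)
    (hf : ∀ p, f p = ‖muC c p‖ ^ 2) (p : HypVS n) :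
    gradient f p = 0 ↔ ((∑ i, xPart p i * yPart p i) = c ∨ p = 0) := by
  set L := Lder p with hL
  set a := (muC c p).re with ha
  set b := (muC c p).im with hb
  have hmu : HasFDerivAt (muC c) L p := hasFDerivAt_muC c p
  have hre : HasFDerivAt (fun q => (muC c q).re) (Complex.reCLM.comp L) p :=
    Complex.reCLM.hasFDerivAt.comp p hmu
  have him : HasFDerivAt (fun q => (muC c q).im) (Complex.imCLM.comp L) p :=
    Complex.imCLM.hasFDerivAt.comp p hmu
  set F : HypVS n →L[ℝ] ℝ :=
    (a • Complex.reCLM.comp L + a • Complex.reCLM.comp L) +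
    (b • Complex.imCLM.comp L + b • Complex.imCLM.comp L) with hFdef
  have hfeq : f = fun q => (muC c q).re * (muC c q).re + (muC c q).im * (muC c q).im := by
    funext q
    rw [hf q, Complex.sq_norm, Complex.normSq_apply]
  have hF : HasFDerivAt f F p := by
    rw [hfeq]
    exact (hre.mul hre).add (him.mul him)
  have hFv : ∀ v, F v = 2 * (a * (L v).re + b * (L v).im) := by
    intro v
    simp only [hFdef, ContinuousLinearMap.add_apply, ContinuousLinearMap.smul_apply,
      ContinuousLinearMap.comp_apply, Complex.reCLM_apply, Complex.imCLM_apply,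
      smul_eq_mul]
    ring
  have hgrad : gradient f p = 0 ↔ ∀ v, F v = 0 := by
    rw [gradient, hF.fderiv]
    rw [map_eq_zero_iff _ (InnerProductSpace.toDual ℝ (HypVS n)).symm.injective]
    exact ContinuousLinearMap.ext_iff
  rw [hgrad]
  constructor
  · intro h
    by_cases hsum : (∑ i, xPart p i * yPart p i) = c
    · exact Or.inl hsum
    · right
      have hmune : muC c p ≠ 0 := sub_ne_zero.mpr hsum
      have hns : 0 < a * a + b * b := by
        have := Complex.normSq_pos.mpr hmune
        rwa [Complex.normSq_apply] at this
      have hy : ∀ i, yPart p i = 0 := by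
        intro i
        have h1 := h (vX i (starRingEnd ℂ (yPart p i) * muC c p))
        rw [hFv, Lder_vX] at h1
        have h2 : yPart p i * (starRingEnd ℂ (yPart p i) * muC c p)
            = (Complex.normSq (yPart p i) : ℝ) * muC c p := by
          rw [← mul_assoc, Complex.mul_conj]
        rw [h2] at h1
        have h3 : Complex.normSq (yPart p i) = 0 := by
          simp only [Complex.re_ofReal_mul, Complex.im_ofReal_mul, ← ha, ← hb] at h1
          nlinarith [Complex.normSq_nonneg (yPart p i)]
        exact Complex.normSq_eq_zero.mp h3
      have hx : ∀ i, xPart p i = 0 := by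
        intro i
        have h1 := h (vY i (starRingEnd ℂ (xPart p i) * muC c p))
        rw [hFv, Lder_vY] at h1
        have h2 : xPart p i * (starRingEnd ℂ (xPart p i) * muC c p)
            = (Complex.normSq (xPart p i) : ℝ) * muC c p := by
          rw [← mul_assoc, Complex.mul_conj]
        rw [h2] at h1
        have h3 : Complex.normSq (xPart p i) = 0 := by
          simp only [Complex.re_ofReal_mul, Complex.im_ofReal_mul, ← ha, ← hb] at h1
          nlinarith [Complex.normSq_nonneg (xPart p i)]
        exact Complex.normSq_eq_zero.mp h3
      apply (WithLp.equiv 2 (Ecn n × Ecn n)).injective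
      apply Prod.ext
      · ext i; exact hx i
      · ext i; exact hy i
  · intro h v
    rcases h with h | h
    · have : muC c p = 0 := sub_eq_zero.mpr h
      rw [hFv]
      simp [ha, hb, this]
    · rw [hFv]
      have hL0 : L v = 0 := by
        rw [hL, Lder_apply]
        subst h
        simp [xPart, yPart]
      simp [hL0]
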